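/- Let C ⊂ ℙ⁴ be the union of 5 distinct lines through a common point O, such that no hyperplane contains all five lines and no four of the lines are coplanar. Let Q be a general point of ℙ⁴ and π_Q the projection from Q to a hyperplane. Then there is exactly one quadric surface in ℙ³ containing π_Q(C), and it is a quadric cone with vertex π_Q(O). -/

import Mathlib

noncomputable section

open Module Submodule QuadraticMap

-- helper 1 : separating functional
lemma dual_sep {E : Type*} [AddCommGroup E] [Module ℂ E] {W : Submodule ℂ E} {v : E}
    (hv : v ∉ W) : ∃ φ : E →ₗ[ℂ] ℂ, (∀ w ∈ W, φ w = 0) ∧ φ v ≠ 0 := by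
  have h0 : W.mkQ v ≠ 0 := by
    simpa [Submodule.Quotient.mk_eq_zero] using hv
  obtain ⟨g, hg⟩ : ∃ g : Module.Dual ℂ (E ⧸ W), g (W.mkQ v) ≠ 0 := by
    by_contra h
    push_neg at h
    exact h0 ((Module.forall_dual_apply_eq_zero_iff ℂ _).mp h)
  refine ⟨g ∘ₗ W.mkQ, fun w hw => ?_, hg⟩
  simp [Submodule.mkQ_apply, (Submodule.Quotient.mk_eq_zero W).mpr hw]

-- helper 2 : functional to polynomial
lemma func_to_poly (g : (Fin 5 → ℂ) →ₗ[ℂ] ℂ) :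
    ∃ p : MvPolynomial (Fin 5) ℂ, p.IsHomogeneous 1 ∧
      ∀ v, MvPolynomial.eval v p = g v := by
  refine ⟨∑ j, MvPolynomial.C (g fun k => if j = k then 1 else 0) * MvPolynomial.X j, ?_, ?_⟩
  · exact MvPolynomial.IsHomogeneous.sum _ _ _ fun j _ => by
      simpa using (MvPolynomial.isHomogeneous_C (Fin 5) _).mul (MvPolynomial.isHomogeneous_X ℂ j)
  · intro v
    rw [map_sum]
    conv_rhs => rw [pi_eq_sum_univ v, map_sum]
    refine Finset.sum_congr rfl fun j _ => ?_
    simp [_root_.map_smul, smul_eq_mul, mul_comm]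

-- finrank of span of an independent pair
lemma span_pair_finrank {K : Type*} [AddCommGroup K] [Module ℂ K] {x y : K}
    (h : ∀ a b : ℂ, a • x + b • y = 0 → a = 0 ∧ b = 0) :
    finrank ℂ (span ℂ ({x, y} : Set K)) = 2 := by
  have hli : LinearIndependent ℂ ![x, y] := LinearIndependent.pair_iff.mpr h
  have hr : Set.range ![x, y] = {x, y} := by
    ext z; simp [Matrix.range_cons, Matrix.range_empty]; tauto
  rw [← hr, finrank_span_eq_card hli]
  simp

lemma conic5 {K : Type*} [AddCommGroup K] [Module ℂ K] [FiniteDimensional ℂ K]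
    (hK : finrank ℂ K = 3) (P : Fin 5 → K)
    (hpair : ∀ i j : Fin 5, i ≠ j → ∀ a b : ℂ, a • P i + b • P j = 0 → a = 0 ∧ b = 0)
    (h4 : ∀ s : Finset (Fin 5), s.card = 4 → span ℂ (P '' ↑s) = ⊤) :
    ∃ C : QuadraticForm ℂ K, C ≠ 0 ∧ (∀ i, C (P i) = 0) ∧
      ∀ C' : QuadraticForm ℂ K, (∀ i, C' (P i) = 0) → ∃ c : ℂ, C' = c • C := by
  classical
  have hfr2 : ∀ u v : Fin 5, u ≠ v → finrank ℂ (span ℂ ({P u, P v} : Set K)) = 2 :=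
    fun u v huv => span_pair_finrank (hpair u v huv)
  -- two bad pairs sharing a point give a contradiction
  have keyX : ∀ j u v w : Fin 5, j ≠ u → j ≠ v → j ≠ w → u ≠ v → u ≠ w → v ≠ w →
      P j ∈ span ℂ ({P u, P v} : Set K) → P j ∈ span ℂ ({P u, P w} : Set K) → False := by
    intro j u v w hju hjv hjw huv huw hvw h1 h2
    set W := span ℂ ({P u, P v} : Set K) ⊓ span ℂ ({P u, P w} : Set K) with hW
    have hjuW : span ℂ ({P j, P u} : Set K) ≤ W := by
      rw [span_le]
      rintro z (rfl | rfl)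
      · exact ⟨h1, h2⟩
      · exact ⟨subset_span (by simp), subset_span (by simp)⟩
    have h2W : 2 ≤ finrank ℂ W := by
      rw [← hfr2 j u hju]
      exact Submodule.finrank_mono hjuW
    have hWuv : W = span ℂ ({P u, P v} : Set K) :=
      Submodule.eq_of_le_of_finrank_le inf_le_left (by rw [hfr2 u v huv]; exact h2W)
    have hWuw : W = span ℂ ({P u, P w} : Set K) :=
      Submodule.eq_of_le_of_finrank_le inf_le_right (by rw [hfr2 u w huw]; exact h2W)
    -- all four points lie in span {P u, P v}
    have hcard : ({j, u, v, w} : Finset (Fin 5)).card = 4 := by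
      rw [Finset.card_insert_of_notMem (by simp [hju, hjv, hjw]),
        Finset.card_insert_of_notMem (by simp [huv, huw]),
        Finset.card_insert_of_notMem (by simp [hvw]), Finset.card_singleton]
    have htop := h4 _ hcard
    have hle : span ℂ (P '' ↑({j, u, v, w} : Finset (Fin 5))) ≤ span ℂ ({P u, P v} : Set K) := by
      rw [span_le]
      rintro z ⟨i, hi, rfl⟩
      simp only [Finset.coe_insert, Finset.coe_singleton, Set.mem_insert_iff,
        Set.mem_singleton_iff] at hi
      rcases hi with rfl | rfl | rfl | rfl
      · exact h1
      · exact subset_span (by simp)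
      · exact subset_span (by simp)
      · rw [← hWuv, hWuw]; exact subset_span (by simp)
    rw [htop] at hle
    have h3 : finrank ℂ (span ℂ ({P u, P v} : Set K)) = 3 := by
      rw [le_antisymm le_top hle, finrank_top, hK]
    rw [hfr2 u v huv] at h3
    exact absurd h3 (by norm_num)
  -- existence of a good pairing
  have hgoodpair : ∀ j a b c d : Fin 5, j ≠ a → j ≠ b → j ≠ c → j ≠ d →
      a ≠ b → a ≠ c → a ≠ d → b ≠ c → b ≠ d → c ≠ d →
      (∀ i, i ≠ j → i = a ∨ i = b ∨ i = c ∨ i = d) →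
      ∃ u v w z : Fin 5, (∀ i, i ≠ j → i = u ∨ i = v ∨ i = w ∨ i = z) ∧
        P j ∉ span ℂ ({P u, P v} : Set K) ∧ P j ∉ span ℂ ({P w, P z} : Set K) := by
    intro j a b c d hja hjb hjc hjd hab hac had hbc hbd hcd hmem
    by_cases hAB : P j ∈ span ℂ ({P a, P b} : Set K)
    · -- pairing {a,c},{b,d}
      refine ⟨a, c, b, d, fun i hi => by rcases hmem i hi with rfl|rfl|rfl|rfl <;> tauto, ?_, ?_⟩
      · intro hAC
        exact keyX j a b c hja hjb hjc hab hac hbc hAB hAC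
      · intro hBD
        rw [Set.pair_comm] at hAB
        exact keyX j b a d hjb hja hjd (Ne.symm hab) hbd had hAB hBD
    · by_cases hCD : P j ∈ span ℂ ({P c, P d} : Set K)
      · -- pairing {a,d},{b,c}
        refine ⟨a, d, b, c, fun i hi => by rcases hmem i hi with rfl|rfl|rfl|rfl <;> tauto, ?_, ?_⟩
        · intro hAD
          rw [Set.pair_comm] at hCD hAD
          exact keyX j d c a hjd hjc hja (Ne.symm hcd) (Ne.symm had) (Ne.symm hac) hCD hAD
        · intro hBC
          rw [Set.pair_comm] at hBC
          exact keyX j c d b hjc hjd hjb hcd (Ne.symm hbc) (Ne.symm hbd) hCD hBC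
      · exact ⟨a, b, c, d, hmem, hAB, hCD⟩
  -- for each j a quadratic form vanishing at the other points but not at P j
  have hGamma : ∀ j : Fin 5, ∃ G : QuadraticForm ℂ K,
      G (P j) ≠ 0 ∧ ∀ i, i ≠ j → G (P i) = 0 := by
    have build : ∀ j a b c d : Fin 5, j ≠ a → j ≠ b → j ≠ c → j ≠ d →
        a ≠ b → a ≠ c → a ≠ d → b ≠ c → b ≠ d → c ≠ d →
        (∀ i, i ≠ j → i = a ∨ i = b ∨ i = c ∨ i = d) →
        ∃ G : QuadraticForm ℂ K, G (P j) ≠ 0 ∧ ∀ i, i ≠ j → G (P i) = 0 := by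
      intro j a b c d h1 h2 h3 h4' h5 h6 h7 h8 h9 h10 hmem
      obtain ⟨u, v, w, z, hm, hg1, hg2⟩ := hgoodpair j a b c d h1 h2 h3 h4' h5 h6 h7 h8 h9 h10 hmem
      obtain ⟨φ, hφ0, hφj⟩ := dual_sep hg1
      obtain ⟨ψ, hψ0, hψj⟩ := dual_sep hg2
      refine ⟨linMulLin φ ψ, by simpa [linMulLin_apply] using mul_ne_zero hφj hψj, ?_⟩
      intro i hi
      rcases hm i hi with rfl | rfl | rfl | rfl
      · rw [linMulLin_apply, hφ0 (P i) (subset_span (Set.mem_insert _ _)), zero_mul]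
      · rw [linMulLin_apply, hφ0 (P i) (subset_span (Set.mem_insert_of_mem _ rfl)), zero_mul]
      · rw [linMulLin_apply, hψ0 (P i) (subset_span (Set.mem_insert _ _)), mul_zero]
      · rw [linMulLin_apply, hψ0 (P i) (subset_span (Set.mem_insert_of_mem _ rfl)), mul_zero]
    intro j
    fin_cases j
    · exact build 0 1 2 3 4 (by decide) (by decide) (by decide) (by decide) (by decide)
        (by decide) (by decide) (by decide) (by decide) (by decide) (by decide)
    · exact build 1 0 2 3 4 (by decide) (by decide) (by decide) (by decide) (by decide)
        (by decide) (by decide) (by decide) (by decide) (by decide) (by decide)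
    · exact build 2 0 1 3 4 (by decide) (by decide) (by decide) (by decide) (by decide)
        (by decide) (by decide) (by decide) (by decide) (by decide) (by decide)
    · exact build 3 0 1 2 4 (by decide) (by decide) (by decide) (by decide) (by decide)
        (by decide) (by decide) (by decide) (by decide) (by decide) (by decide)
    · exact build 4 0 1 2 3 (by decide) (by decide) (by decide) (by decide) (by decide)
        (by decide) (by decide) (by decide) (by decide) (by decide) (by decide)
  -- coordinates
  obtain ⟨b⟩ : Nonempty (Basis (Fin 3) ℂ K) := ⟨finBasisOfFinrankEq ℂ K hK⟩
  set idx : Fin 6 → Fin 3 × Fin 3 := ![(0,0), (1,1), (2,2), (0,1), (0,2), (1,2)] with hidx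
  set Bq : Fin 6 → QuadraticForm ℂ K :=
    fun k => linMulLin (b.coord (idx k).1) (b.coord (idx k).2) with hBq
  set M : (Fin 6 → ℂ) →ₗ[ℂ] QuadraticForm ℂ K := Fintype.linearCombination ℂ Bq with hM
  have hMapp : ∀ (a : Fin 6 → ℂ) (v : K), M a v =
      a 0 * (b.repr v 0 * b.repr v 0) + a 1 * (b.repr v 1 * b.repr v 1)
      + a 2 * (b.repr v 2 * b.repr v 2) + a 3 * (b.repr v 0 * b.repr v 1)
      + a 4 * (b.repr v 0 * b.repr v 2) + a 5 * (b.repr v 1 * b.repr v 2) := by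
    intro a v
    rw [hM, Fintype.linearCombination_apply]
    have : (∑ k, a k • Bq k) v = ∑ k, a k • (Bq k v) := by
      rw [QuadraticMap.sum_apply]
      exact Finset.sum_congr rfl fun k _ => QuadraticMap.smul_apply _ _ _
    have i0 : idx 0 = (0, 0) := rfl
    have i1 : idx 1 = (1, 1) := rfl
    have i2 : idx 2 = (2, 2) := rfl
    have i3 : idx 3 = (0, 1) := rfl
    have i4 : idx 4 = (0, 2) := rfl
    have i5 : idx 5 = (1, 2) := rfl
    rw [this, Fin.sum_univ_six]
    simp only [hBq, linMulLin_apply, Basis.coord_apply, i0, i1, i2, i3, i4, i5, smul_eq_mul]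
  -- expansion of a quadratic form in coordinates
  have expand : ∀ (Q : QuadraticForm ℂ K) (v : K),
      Q v = b.repr v 0 * b.repr v 0 * Q (b 0) + b.repr v 1 * b.repr v 1 * Q (b 1)
          + b.repr v 2 * b.repr v 2 * Q (b 2)
          + b.repr v 0 * b.repr v 1 * polar (⇑Q) (b 0) (b 1)
          + b.repr v 0 * b.repr v 2 * polar (⇑Q) (b 0) (b 2)
          + b.repr v 1 * b.repr v 2 * polar (⇑Q) (b 1) (b 2) := by
    intro Q v
    conv_lhs => rw [← b.sum_repr v, Fin.sum_univ_three]
    rw [QuadraticMap.map_add (⇑Q), QuadraticMap.map_add (⇑Q), polar_add_left]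
    simp only [QuadraticMap.map_smul, polar_smul_left, polar_smul_right, smul_eq_mul]
    ring
  set coeffs : QuadraticForm ℂ K → (Fin 6 → ℂ) := fun Q =>
    ![Q (b 0), Q (b 1), Q (b 2), polar (⇑Q) (b 0) (b 1), polar (⇑Q) (b 0) (b 2),
      polar (⇑Q) (b 1) (b 2)] with hcoeffs
  have hMcoeffs : ∀ Q : QuadraticForm ℂ K, M (coeffs Q) = Q := by
    intro Q
    ext v
    have c0 : coeffs Q 0 = Q (b 0) := rfl
    have c1 : coeffs Q 1 = Q (b 1) := rfl
    have c2 : coeffs Q 2 = Q (b 2) := rfl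
    have c3 : coeffs Q 3 = polar (⇑Q) (b 0) (b 1) := rfl
    have c4 : coeffs Q 4 = polar (⇑Q) (b 0) (b 2) := rfl
    have c5 : coeffs Q 5 = polar (⇑Q) (b 1) (b 2) := rfl
    rw [hMapp, expand Q v, c0, c1, c2, c3, c4, c5]
    ring
  -- injectivity of M
  have hMinj : ∀ a : Fin 6 → ℂ, M a = 0 → a = 0 := by
    intro a ha
    have hv : ∀ v : K, M a v = 0 := fun v => by rw [ha]; rfl
    have hbr : ∀ i j : Fin 3, b.repr (b i) j = if i = j then 1 else 0 := by
      intro i j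
      rw [b.repr_self i, Finsupp.single_apply]
    have hbr2 : ∀ i i' j : Fin 3, b.repr (b i + b i') j =
        (if i = j then (1:ℂ) else 0) + (if i' = j then 1 else 0) := by
      intro i i' j
      rw [map_add, Finsupp.add_apply, hbr, hbr]
    have e0 := hv (b 0); have e1 := hv (b 1); have e2 := hv (b 2)
    have e3 := hv (b 0 + b 1); have e4 := hv (b 0 + b 2); have e5 := hv (b 1 + b 2)
    rw [hMapp] at e0 e1 e2 e3 e4 e5
    simp only [hbr, hbr2] at e0 e1 e2 e3 e4 e5
    simp at e0 e1 e2 e3 e4 e5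
    funext k
    fin_cases k
    · simpa using e0
    · simpa using e1
    · simpa using e2
    · show a 3 = 0; linear_combination e3 - e0 - e1
    · show a 4 = 0; linear_combination e4 - e0 - e2
    · show a 5 = 0; linear_combination e5 - e1 - e2
  -- the evaluation map
  set ev : QuadraticForm ℂ K →ₗ[ℂ] (Fin 5 → ℂ) :=
    { toFun := fun Q i => Q (P i)
      map_add' := fun Q Q' => by funext i; exact QuadraticMap.add_apply _ _ _
      map_smul' := fun c Q => by funext i; exact QuadraticMap.smul_apply _ _ _ } with hev
  set Φ : (Fin 6 → ℂ) →ₗ[ℂ] (Fin 5 → ℂ) := ev ∘ₗ M with hΦ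
  -- surjectivity of Φ
  choose G hGj hGi using hGamma
  have hsurj : Function.Surjective Φ := by
    intro f
    refine ⟨∑ j, (f j / (G j) (P j)) • coeffs (G j), ?_⟩
    funext i
    have hΦc : ∀ j, Φ (coeffs (G j)) = ev (G j) := fun j => by
      rw [hΦ, LinearMap.comp_apply, hMcoeffs]
    have : Φ (∑ j, (f j / (G j) (P j)) • coeffs (G j)) =
        ∑ j, (f j / (G j) (P j)) • ev (G j) := by
      rw [map_sum]
      exact Finset.sum_congr rfl fun j _ => by rw [_root_.map_smul, hΦc]
    rw [this]
    rw [Finset.sum_apply]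
    rw [Finset.sum_eq_single i]
    · simp only [Pi.smul_apply, hev, LinearMap.coe_mk, AddHom.coe_mk, smul_eq_mul]
      exact div_mul_cancel₀ _ (hGj i)
    · intro j _ hji
      simp only [Pi.smul_apply, hev, LinearMap.coe_mk, AddHom.coe_mk, smul_eq_mul,
        hGi j i (Ne.symm hji), mul_zero]
    · intro h; exact absurd (Finset.mem_univ i) h
  -- the kernel of Φ is one dimensional
  have hkerdim : finrank ℂ (LinearMap.ker Φ) = 1 := by
    have h1 := LinearMap.finrank_range_add_finrank_ker Φ
    rw [LinearMap.range_eq_top.mpr hsurj, finrank_top] at h1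
    have h2 : finrank ℂ (Fin 5 → ℂ) = 5 := by simp [Module.finrank_pi]
    have h3 : finrank ℂ (Fin 6 → ℂ) = 6 := by simp [Module.finrank_pi]
    omega
  obtain ⟨a₀, ha₀ne, ha₀span⟩ := finrank_eq_one_iff'.mp hkerdim
  refine ⟨M (a₀ : Fin 6 → ℂ), ?_, ?_, ?_⟩
  · intro h
    apply ha₀ne
    have := hMinj _ h
    exact Subtype.ext this
  · intro i
    have : Φ (a₀ : Fin 6 → ℂ) = 0 := a₀.2
    have := congrFun this i
    exact this
  · intro C' hC'
    have hker : coeffs C' ∈ LinearMap.ker Φ := by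
      rw [LinearMap.mem_ker, hΦ, LinearMap.comp_apply, hMcoeffs]
      funext i
      exact hC' i
    obtain ⟨c, hc⟩ := ha₀span ⟨coeffs C', hker⟩
    refine ⟨c, ?_⟩
    have hcc : c • (a₀ : Fin 6 → ℂ) = coeffs C' := by
      have := congrArg (Subtype.val) hc
      simpa using this
    rw [← hMcoeffs C', ← hcc, _root_.map_smul]


/-- The underlying vector space of ℙ⁴ over ℂ. -/
abbrev V5 : Type := Fin 5 → ℂ

/-- The underlying vector space of ℙ³ over ℂ. -/
abbrev V4 : Type := Fin 4 → ℂ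

/-- ℙ⁴ over ℂ. -/
abbrev P4 : Type := Projectivization ℂ V5

set_option maxHeartbeats 2000000 in
/-- Let `C ⊂ ℙ⁴` be the union of 5 distinct lines through a common point `O`, such that
no hyperplane contains all five lines and no four of the lines are coplanar.  Let `Q` be
a general point of ℙ⁴ (any point of a nonempty Zariski-open set) and `π_Q` the
projection from `Q` to a hyperplane ℙ³ (realized by a surjective linear map
`L : ℂ⁵ → ℂ⁴` with kernel the line of `Q`).  Then there is exactly one quadric surface
in ℙ³ (up to a nonzero scalar) containing `π_Q(C)`, and it is a quadric cone with
vertex `π_Q(O)`. -/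
theorem stmt_11 (O : P4) (ℓ : Fin 5 → Submodule ℂ V5)
    (hdim : ∀ i, Module.finrank ℂ (ℓ i) = 2)
    (hO : ∀ i, O.rep ∈ ℓ i)
    (hlinj : Function.Injective ℓ)
    (hnohyp : (⨆ i, ℓ i) = ⊤)
    (hno4 : ∀ s : Finset (Fin 5), s.card = 4 →
        ¬ ∃ W : Submodule ℂ V5, Module.finrank ℂ W = 3 ∧ ∀ i ∈ s, ℓ i ≤ W) :
    ∃ F : MvPolynomial (Fin 5) ℂ, F ≠ 0 ∧ (∃ n, F.IsHomogeneous n) ∧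
      ∀ x : P4, MvPolynomial.eval x.rep F ≠ 0 →
        ∀ L : V5 →ₗ[ℂ] V4, Function.Surjective L →
          LinearMap.ker L = Submodule.span ℂ {x.rep} →
          ∃ Q : QuadraticForm ℂ V4, Q ≠ 0 ∧
            (∀ i, ∀ v ∈ ℓ i, Q (L v) = 0) ∧
            (∀ w : V4, Q (L O.rep + w) - Q (L O.rep) - Q w = 0) ∧
            (∀ Q' : QuadraticForm ℂ V4, Q' ≠ 0 → (∀ i, ∀ v ∈ ℓ i, Q' (L v) = 0) →
              ∃ c : ℂ, c ≠ 0 ∧ ∀ w : V4, Q' w = c * Q w) := by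
  classical
  have hV5 : finrank ℂ V5 = 5 := by simp
  have hV4 : finrank ℂ V4 = 4 := by simp
  set e := O.rep with he_def
  have he : e ≠ 0 := O.rep_nonzero
  -- directions of the lines
  have hd : ∀ i, ∃ di, di ∈ ℓ i ∧ di ∉ span ℂ {e} := by
    intro i
    have hlt : span ℂ {e} < ℓ i := by
      refine lt_of_le_of_ne ?_ ?_
      · rw [span_le, Set.singleton_subset_iff]; exact hO i
      · intro h
        have h1 : finrank ℂ (span ℂ ({e} : Set V5)) = 1 := finrank_span_singleton he
        rw [h, hdim i] at h1
        norm_num at h1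
    obtain ⟨z, hz1, hz2⟩ := SetLike.exists_of_lt hlt
    exact ⟨z, hz1, hz2⟩
  choose d hdmem hdnot using hd
  -- e and d i are independent
  have hed : ∀ i, ∀ a b : ℂ, a • e + b • d i = 0 → a = 0 ∧ b = 0 := by
    intro i a b hab
    by_cases hb : b = 0
    · subst hb
      rw [zero_smul, add_zero] at hab
      rcases smul_eq_zero.mp hab with h | h
      · exact ⟨h, rfl⟩
      · exact absurd h he
    · exfalso
      apply hdnot i
      have h1 : b • d i = (-a) • e := by linear_combination (norm := module) hab
      have h2 : d i = (b⁻¹ * -a) • e := by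
        rw [mul_smul, ← h1, smul_smul, inv_mul_cancel₀ hb, one_smul]
      rw [h2]
      exact smul_mem _ _ (mem_span_singleton_self e)
  have hli : ∀ i, ℓ i = span ℂ ({e, d i} : Set V5) := by
    intro i
    refine (Submodule.eq_of_le_of_finrank_le ?_ ?_).symm
    · rw [span_le]
      rintro z (rfl | rfl)
      · exact hO i
      · exact hdmem i
    · rw [hdim i, span_pair_finrank (hed i)]
  -- two distinct lines are really distinct: d i ∉ ℓ j
  have hdd : ∀ i j : Fin 5, i ≠ j → ∀ a b c : ℂ, a • d i + b • d j = c • e → a = 0 := by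
    intro i j hij a b c habc
    by_contra ha
    have hdi : d i ∈ ℓ j := by
      rw [hli j]
      have h1 : a • d i = c • e + (-b) • d j := by
        linear_combination (norm := module) habc
      have h2 : d i = (a⁻¹ * c) • e + (a⁻¹ * -b) • d j := by
        rw [mul_smul, mul_smul, ← smul_add, ← h1, smul_smul, inv_mul_cancel₀ ha, one_smul]
      rw [h2]
      exact add_mem (smul_mem _ _ (subset_span (by simp)))
        (smul_mem _ _ (subset_span (by simp)))
    have hle : ℓ i ≤ ℓ j := by
      rw [hli i, span_le]
      rintro z (rfl | rfl)
      · exact hO j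
      · exact hdi
    exact hij (hlinj (Submodule.eq_of_le_of_finrank_le hle (by rw [hdim, hdim])))
  -- the sup of lines over a nonempty finset
  have hTs : ∀ s : Finset (Fin 5), s.Nonempty →
      s.sup ℓ = span ℂ (insert e (d '' ↑s)) := by
    intro s hs
    apply le_antisymm
    · refine Finset.sup_le fun i hi => ?_
      rw [hli i, span_le]
      rintro z (rfl | rfl)
      · exact subset_span (Set.mem_insert _ _)
      · exact subset_span (Set.mem_insert_of_mem _ ⟨i, hi, rfl⟩)
    · rw [span_le]
      rintro z (rfl | ⟨i, hi, rfl⟩)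
      · obtain ⟨i, hi⟩ := hs
        exact (Finset.le_sup hi : ℓ i ≤ s.sup ℓ) (hO i)
      · exact (Finset.le_sup hi : ℓ i ≤ s.sup ℓ) (hdmem i)
  -- generic polynomial
  have hpoly : ∀ s : Finset (Fin 5), ∃ p : MvPolynomial (Fin 5) ℂ,
      p ≠ 0 ∧ (∃ n, p.IsHomogeneous n) ∧
      (s.sup ℓ ≠ ⊤ → ∀ v, MvPolynomial.eval v p ≠ 0 → v ∉ s.sup ℓ) := by
    intro s
    by_cases h : s.sup ℓ = ⊤
    · refine ⟨1, ?_, ⟨0, MvPolynomial.isHomogeneous_one _ _⟩, fun h' => absurd h h'⟩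
      exact one_ne_zero
    · obtain ⟨z, -, hz⟩ := SetLike.exists_of_lt (show s.sup ℓ < ⊤ from Ne.lt_top h)
      obtain ⟨φ, hφ0, hφz⟩ := dual_sep hz
      obtain ⟨p, hhom, hpev⟩ := func_to_poly φ
      refine ⟨p, ?_, ⟨1, hhom⟩, ?_⟩
      · intro hzero
        apply hφz
        rw [← hpev z, hzero]
        simp
      · intro _ v hv hmem
        exact hv (by rw [hpev]; exact hφ0 v hmem)
  choose p hp0 hphom hpavoid using hpoly
  choose deg hdeg using hphom
  refine ⟨∏ s : Finset (Fin 5), p s, ?_, ?_, ?_⟩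
  · rw [Finset.prod_ne_zero_iff]
    exact fun s _ => hp0 s
  · exact ⟨∑ s : Finset (Fin 5), deg s,
      MvPolynomial.IsHomogeneous.prod _ _ _ fun s _ => hdeg s⟩
  intro x hx L hLsurj hLker
  have hxs : ∀ s : Finset (Fin 5), s.sup ℓ ≠ ⊤ → x.rep ∉ s.sup ℓ := by
    intro s hs
    refine hpavoid s hs x.rep ?_
    rw [map_prod] at hx
    exact Finset.prod_ne_zero_iff.mp hx s (Finset.mem_univ s)
  -- x.rep avoids the span of two lines
  have hx2 : ∀ i j : Fin 5, i ≠ j → x.rep ∉ ℓ i ⊔ ℓ j := by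
    intro i j hij
    have h1 : ({i, j} : Finset (Fin 5)).sup ℓ = ℓ i ⊔ ℓ j := by
      rw [Finset.sup_insert, Finset.sup_singleton]
    have h2 : ℓ i ⊔ ℓ j ≠ ⊤ := by
      intro h
      have h3 := Submodule.finrank_sup_add_finrank_inf_eq (ℓ i) (ℓ j)
      rw [h, hdim, hdim, finrank_top, hV5] at h3
      omega
    have := hxs {i, j} (h1 ▸ h2)
    rwa [h1] at this
  set O' : V4 := L e with hO'def
  have hO'ne : O' ≠ 0 := by
    intro h
    have hmem : e ∈ LinearMap.ker L := h
    rw [hLker] at hmem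
    obtain ⟨c, hc⟩ := mem_span_singleton.mp hmem
    have hc0 : c ≠ 0 := by rintro rfl; rw [zero_smul] at hc; exact he hc.symm
    apply hx2 0 1 (by decide)
    have : x.rep = c⁻¹ • e := by rw [← hc, smul_smul, inv_mul_cancel₀ hc0, one_smul]
    rw [this]
    exact (le_sup_left : ℓ 0 ≤ ℓ 0 ⊔ ℓ 1) (smul_mem _ _ (hO 0))
  set q : V4 →ₗ[ℂ] V4 ⧸ span ℂ {O'} := (span ℂ {O'}).mkQ with hq_def
  have hq0 : ∀ w : V4, q w = 0 ↔ w ∈ span ℂ {O'} := fun w =>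
    Submodule.Quotient.mk_eq_zero _
  have hqO' : q O' = 0 := (hq0 O').mpr (mem_span_singleton_self O')
  have hfrk : finrank ℂ (V4 ⧸ span ℂ ({O'} : Set V4)) = 3 := by
    have h1 := Submodule.finrank_quotient_add_finrank (span ℂ ({O'} : Set V4))
    rw [finrank_span_singleton hO'ne, hV4] at h1
    omega
  -- ker L facts
  have hkerL : ∀ v : V5, L v = 0 → v ∈ span ℂ {x.rep} := by
    intro v h
    rw [← hLker]; exact h
  -- the central lemma
  have hcen : ∀ i j : Fin 5, i ≠ j → ∀ v ∈ ℓ i ⊔ ℓ j, q (L v) = 0 → v ∈ span ℂ {e} := by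
    intro i j hij v hv h0
    obtain ⟨c, hc⟩ := mem_span_singleton.mp ((hq0 _).mp h0)
    have hL0 : L (v - c • e) = 0 := by
      rw [_root_.map_sub, _root_.map_smul, ← hO'def, ← hc, sub_self]
    obtain ⟨t, ht⟩ := mem_span_singleton.mp (hkerL _ hL0)
    by_cases htz : t = 0
    · rw [htz, zero_smul] at ht
      have : v = c • e := by linear_combination (norm := module) -ht
      rw [this]
      exact smul_mem _ _ (mem_span_singleton_self e)
    · exfalso
      apply hx2 i j hij
      have hve : v - c • e ∈ ℓ i ⊔ ℓ j :=
        sub_mem hv (smul_mem _ _ ((le_sup_left : ℓ i ≤ ℓ i ⊔ ℓ j) (hO i)))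
      have : x.rep = t⁻¹ • (v - c • e) := by
        rw [← ht, smul_smul, inv_mul_cancel₀ htz, one_smul]
      rw [this]
      exact smul_mem _ _ hve
  -- the projected points
  set Pp : Fin 5 → V4 ⧸ span ℂ ({O'} : Set V4) := fun i => q (L (d i)) with hPp
  have hpind : ∀ i j : Fin 5, i ≠ j → ∀ a b : ℂ, a • Pp i + b • Pp j = 0 → a = 0 ∧ b = 0 := by
    intro i j hij a b hab
    have h0 : q (L (a • d i + b • d j)) = 0 := by
      rw [_root_.map_add, _root_.map_add, _root_.map_smul, _root_.map_smul, _root_.map_smul,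
        _root_.map_smul]
      exact hab
    have hv : a • d i + b • d j ∈ ℓ i ⊔ ℓ j :=
      add_mem ((le_sup_left : ℓ i ≤ ℓ i ⊔ ℓ j) (smul_mem _ _ (hdmem i)))
        ((le_sup_right : ℓ j ≤ ℓ i ⊔ ℓ j) (smul_mem _ _ (hdmem j)))
    obtain ⟨c, hc⟩ := mem_span_singleton.mp (hcen i j hij _ hv h0)
    constructor
    · exact hdd i j hij a b c hc.symm
    · refine hdd j i (Ne.symm hij) b a c ?_
      linear_combination (norm := module) -hc
  -- the four-point spanning condition
  have hspan4 : ∀ s : Finset (Fin 5), s.card = 4 → span ℂ (Pp '' ↑s) = ⊤ := by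
    intro s hs
    have hsne : s.Nonempty := Finset.card_pos.mp (by omega)
    -- finrank of the sup is at least 4
    have hfrs : 4 ≤ finrank ℂ ↥(s.sup ℓ) := by
      by_contra hlt
      push_neg at hlt
      obtain ⟨i, hi⟩ := hsne
      have hle : ℓ i ≤ s.sup ℓ := Finset.le_sup hi
      have h2 : 2 ≤ finrank ℂ ↥(s.sup ℓ) := by
        rw [← hdim i]; exact Submodule.finrank_mono hle
      interval_cases h : finrank ℂ ↥(s.sup ℓ)
      · -- finrank = 2 : all lines equal
        obtain ⟨j, hj, hji⟩ : ∃ j ∈ s, j ≠ i := by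
          by_contra hno
          push_neg at hno
          have : s ⊆ {i} := fun k hk => Finset.mem_singleton.mpr (hno k hk)
          have := Finset.card_le_card this
          simp [hs] at this
        have heqi : ℓ i = s.sup ℓ :=
          Submodule.eq_of_le_of_finrank_le hle (by rw [hdim]; omega)
        have heqj : ℓ j = s.sup ℓ :=
          Submodule.eq_of_le_of_finrank_le (Finset.le_sup hj) (by rw [hdim]; omega)
        exact hji (hlinj (heqj.trans heqi.symm))
      · -- finrank = 3 : contradicts hno4
        exact hno4 s hs ⟨s.sup ℓ, h, fun k hk => Finset.le_sup hk⟩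
    have hmap : Submodule.map L (s.sup ℓ) = ⊤ := by
      by_cases hT : s.sup ℓ = ⊤
      · rw [hT, Submodule.map_top, LinearMap.range_eq_top.mpr hLsurj]
      · have hx4 := hxs s hT
        have hker0 : LinearMap.ker (L.domRestrict (s.sup ℓ)) = ⊥ := by
          rw [eq_bot_iff]
          rintro ⟨v, hv⟩ hvk
          have hv0 : L v = 0 := hvk
          obtain ⟨t, ht⟩ := mem_span_singleton.mp (hkerL _ hv0)
          by_cases htz : t = 0
          · rw [htz, zero_smul] at ht
            exact (Submodule.mk_eq_zero _ _).mpr ht.symm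
          · exfalso
            apply hx4
            have : x.rep = t⁻¹ • v := by
              rw [← ht, smul_smul, inv_mul_cancel₀ htz, one_smul]
            rw [this]
            exact smul_mem _ _ hv
        have hfr : finrank ℂ ↥(Submodule.map L (s.sup ℓ)) = finrank ℂ ↥(s.sup ℓ) := by
          rw [← LinearMap.range_domRestrict]
          have h1 := LinearMap.finrank_range_add_finrank_ker (L.domRestrict (s.sup ℓ))
          rw [hker0, finrank_bot] at h1
          omega
        apply Submodule.eq_top_of_finrank_eq
        have hle4 : finrank ℂ ↥(Submodule.map L (s.sup ℓ)) ≤ 4 := by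
          have h5 := Submodule.finrank_le (Submodule.map L (s.sup ℓ))
          omega
        omega
    have hqtop : Submodule.map q (Submodule.map L (s.sup ℓ)) = ⊤ := by
      rw [hmap, Submodule.map_top, Submodule.range_mkQ]
    rw [hTs s hsne, Submodule.map_span, Submodule.map_span] at hqtop
    rw [Set.image_insert_eq, Set.image_insert_eq, ← hO'def, hqO'] at hqtop
    rw [Submodule.span_insert_zero] at hqtop
    rw [← hqtop]
    congr 1
    rw [Set.image_image, Set.image_image]
  -- apply the planar lemma
  obtain ⟨C, hC0, hCv, hCuniq⟩ := conic5 hfrk Pp hpind hspan4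
  refine ⟨C.comp q, ?_, ?_, ?_, ?_⟩
  · intro h
    apply hC0
    ext k
    obtain ⟨w, rfl⟩ := Submodule.mkQ_surjective _ k
    have := DFunLike.congr_fun h w
    simpa [QuadraticMap.comp_apply, hq_def] using this
  · intro i v hv
    rw [hli i] at hv
    obtain ⟨a, b, hab⟩ := Submodule.mem_span_pair.mp hv
    rw [QuadraticMap.comp_apply, ← hab]
    rw [_root_.map_add, _root_.map_add, _root_.map_smul, _root_.map_smul, _root_.map_smul,
      _root_.map_smul, ← hO'def, hqO', smul_zero, zero_add]
    have hPpi : q (L (d i)) = Pp i := rfl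
    rw [hPpi, QuadraticMap.map_smul, hCv i, smul_zero]
  · intro w
    rw [QuadraticMap.comp_apply, QuadraticMap.comp_apply, QuadraticMap.comp_apply]
    rw [_root_.map_add, hqO', zero_add]
    simp
  · intro Q' hQ'0 hQ'v
    have hQ'O : Q' O' = 0 := hQ'v 0 e (hO 0)
    have hQ'd : ∀ i, Q' (L (d i)) = 0 := fun i => hQ'v i (d i) (hdmem i)
    have hpolar : ∀ w, polar (⇑Q') O' w = 0 := by
      have htop : span ℂ (insert O' ((fun i => L (d i)) '' Set.univ)) = ⊤ := by
        have h1 : (Finset.univ : Finset (Fin 5)).sup ℓ = ⊤ := by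
          rw [← hnohyp]
          exact le_antisymm (Finset.sup_le fun i _ => le_iSup ℓ i)
            (iSup_le fun i => Finset.le_sup (Finset.mem_univ i))
        have h2 : Submodule.map L ((Finset.univ : Finset (Fin 5)).sup ℓ) = ⊤ := by
          rw [h1, Submodule.map_top, LinearMap.range_eq_top.mpr hLsurj]
        rw [hTs _ Finset.univ_nonempty, Submodule.map_span, Set.image_insert_eq,
          ← hO'def] at h2
        rw [← h2]
        congr 2
        rw [Set.image_image]
        simp
      intro w
      have hw : w ∈ span ℂ (insert O' ((fun i => L (d i)) '' Set.univ)) := by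
        rw [htop]; exact mem_top
      induction hw using Submodule.span_induction with
      | mem z hz =>
        rcases Set.mem_insert_iff.mp hz with rfl | ⟨i, -, rfl⟩
        · show Q' (O' + O') - Q' O' - Q' O' = 0
          have h2 : O' + O' = (2 : ℂ) • O' := by module
          rw [h2, QuadraticMap.map_smul, hQ'O]
          simp
        · show Q' (O' + L (d i)) - Q' O' - Q' (L (d i)) = 0
          have h1 : O' + L (d i) = L (e + d i) := by rw [_root_.map_add]
          rw [h1, hQ'v i _ (add_mem (hO i) (hdmem i)), hQ'O, hQ'd i]
          ring
      | zero => exact polar_zero_right _ _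
      | add y z _ _ hy hz => rw [polar_add_right, hy, hz, add_zero]
      | smul c y _ hy => rw [polar_smul_right, hy, smul_zero]
    obtain ⟨sec, hsec⟩ := LinearMap.exists_rightInverse_of_surjective q
      (LinearMap.range_eq_top.mpr (Submodule.mkQ_surjective _))
    have hqsec : ∀ k, q (sec k) = k := fun k => DFunLike.congr_fun hsec k
    have hdesc : ∀ w, Q' w = Q' (sec (q w)) := by
      intro w
      have h0 : q (w - sec (q w)) = 0 := by
        rw [_root_.map_sub, hqsec, sub_self]
      obtain ⟨c, hc⟩ := mem_span_singleton.mp ((hq0 _).mp h0)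
      have hw : w = sec (q w) + c • O' := by
        rw [hc]; abel
      conv_lhs => rw [hw]
      rw [QuadraticMap.map_add (⇑Q'), QuadraticMap.map_smul, hQ'O, smul_zero,
        polar_smul_right, polar_comm, hpolar, smul_zero, add_zero, add_zero]
    set C' : QuadraticForm ℂ (V4 ⧸ span ℂ ({O'} : Set V4)) := Q'.comp sec with hC'
    have hC'v : ∀ i, C' (Pp i) = 0 := by
      intro i
      rw [hC', QuadraticMap.comp_apply, hPp]
      rw [← hdesc (L (d i))]
      exact hQ'd i
    obtain ⟨c, hc⟩ := hCuniq C' hC'v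
    have hQC : ∀ w, Q' w = C' (q w) := fun w => by
      rw [hC', QuadraticMap.comp_apply, ← hdesc]
    refine ⟨c, ?_, ?_⟩
    · rintro rfl
      apply hQ'0
      ext w
      rw [hQC w, hc]
      simp
    · intro w
      rw [hQC w, hc, QuadraticMap.smul_apply, QuadraticMap.comp_apply, smul_eq_mul]
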